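/- Let S ⊂ ℝ² be a compact convex set contained in the horizontal strip {(x,y) : −1 ≤ y ≤ 1}, and suppose the intersection of S with the x-axis is a segment of length at most ε > 0. Then min( area(S ∩ {y ≥ 0}), area(S ∩ {y ≤ 0}) ) ≤ ε. -/

import Mathlib

open MeasureTheory Set
open scoped ENNReal

section NarrowGapAux

lemma ntg_slice_convex (S : Set (ℝ × ℝ)) (hconv : Convex ℝ S) (c : ℝ) :
    Convex ℝ {x : ℝ | (x, c) ∈ S} := by
  intro x₁ h₁ x₂ h₂ p q hp hq hpq
  have := hconv h₁ h₂ hp hq hpq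
  simpa [Prod.smul_mk, Prod.mk_add_mk, ← add_mul, hpq] using this

lemma ntg_slice_compact (S : Set (ℝ × ℝ)) (hcpt : IsCompact S) (c : ℝ) :
    IsCompact {x : ℝ | (x, c) ∈ S} := by
  have h1 : IsCompact (S ∩ (univ ×ˢ {c})) :=
    hcpt.inter_right (isClosed_univ.prod isClosed_singleton)
  have h2 : {x : ℝ | (x, c) ∈ S} = Prod.fst '' (S ∩ (univ ×ˢ {c})) := by
    ext x
    constructor
    · intro hx; exact ⟨(x, c), ⟨hx, by simp⟩, rfl⟩
    · rintro ⟨⟨u, v⟩, ⟨hu, hv⟩, rfl⟩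
      simp only [mem_prod, mem_univ, mem_singleton_iff, true_and] at hv
      simpa [hv] using hu
  rw [h2]
  exact h1.image continuous_fst

lemma ntg_slice_Icc (S : Set (ℝ × ℝ)) (hcpt : IsCompact S) (hconv : Convex ℝ S) (c : ℝ)
    (hne : {x : ℝ | (x, c) ∈ S}.Nonempty) :
    ∃ m M : ℝ, m ≤ M ∧ {x : ℝ | (x, c) ∈ S} = Icc m M := by
  have hc := ntg_slice_convex S hconv c
  have hk := ntg_slice_compact S hcpt c
  have := eq_Icc_of_connected_compact ⟨hne, hc.isPreconnected⟩ hk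
  refine ⟨_, _, ?_, this⟩
  obtain ⟨x, hx⟩ := hne
  rw [this] at hx
  exact le_trans hx.1 hx.2

lemma ntg_slice_nonempty (S : Set (ℝ × ℝ)) (hconv : Convex ℝ S) (p q : ℝ × ℝ)
    (hp : p ∈ S) (hq : q ∈ S) (c : ℝ) (h1 : q.2 ≤ c) (h2 : c ≤ p.2) (hlt : q.2 < p.2) :
    {x : ℝ | (x, c) ∈ S}.Nonempty := by
  set r : ℝ := (c - q.2) / (p.2 - q.2) with hr
  have hd : 0 < p.2 - q.2 := by linarith
  have hr0 : 0 ≤ r := div_nonneg (by linarith) hd.le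
  have hr1 : r ≤ 1 := by
    rw [hr, div_le_one hd]; linarith
  have hmem := hconv hq hp (by linarith : (0:ℝ) ≤ 1 - r) hr0 (by ring)
  refine ⟨(1 - r) * q.1 + r * p.1, ?_⟩
  have h2nd : (1 - r) * q.2 + r * p.2 = c := by
    field_simp [hr]
    have h' : r * (p.2 - q.2) = c - q.2 := by rw [hr]; exact div_mul_cancel₀ _ hd.ne'
    linear_combination h'
  have : (1 - r) • q + r • p = ((1 - r) * q.1 + r * p.1, c) := by
    rw [Prod.ext_iff]
    constructor
    · simp [Prod.smul_def]
    · simpa [Prod.smul_def] using h2nd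
  rwa [this] at hmem

lemma ntg_key_ineq (S : Set (ℝ × ℝ)) (hcpt : IsCompact S) (hconv : Convex ℝ S)
    (ε : ℝ) (hε : 0 < ε)
    (hlen : volume {x : ℝ | (x, (0 : ℝ)) ∈ S} ≤ ENNReal.ofReal ε)
    (y t : ℝ) (hy : 0 < y) (ht : 0 < t)
    (hE : {x : ℝ | (x, y) ∈ S}.Nonempty) (hF : {x : ℝ | (x, -t) ∈ S}.Nonempty) :
    ENNReal.ofReal t * volume {x : ℝ | (x, y) ∈ S}
      + ENNReal.ofReal y * volume {x : ℝ | (x, -t) ∈ S}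
      ≤ ENNReal.ofReal ((y + t) * ε) := by
  obtain ⟨mE, ME, hmE, hEeq⟩ := ntg_slice_Icc S hcpt hconv y hE
  obtain ⟨mF, MF, hmF, hFeq⟩ := ntg_slice_Icc S hcpt hconv (-t) hF
  have hyt : 0 < y + t := by linarith
  have hcomb : ∀ xE ∈ Icc mE ME, ∀ xF ∈ Icc mF MF,
      ((t / (y + t)) * xE + (y / (y + t)) * xF, (0:ℝ)) ∈ S := by
    intro xE hxE xF hxF
    have h1 : (xE, y) ∈ S := by rw [← hEeq] at hxE; exact hxE
    have h2 : (xF, -t) ∈ S := by rw [← hFeq] at hxF; exact hxF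
    have hmem := hconv h1 h2 (le_of_lt (div_pos ht hyt)) (le_of_lt (div_pos hy hyt))
      (by field_simp; ring)
    have heq : (t / (y + t)) • ((xE, y) : ℝ × ℝ) + (y / (y + t)) • ((xF, -t) : ℝ × ℝ)
        = ((t / (y + t)) * xE + (y / (y + t)) * xF, (0:ℝ)) := by
      rw [Prod.ext_iff]
      constructor
      · simp [Prod.smul_def]
      · simp [Prod.smul_def]
        field_simp
        ring
    rwa [heq] at hmem
  set u : ℝ := (t / (y + t)) * mE + (y / (y + t)) * mF with hu
  set v : ℝ := (t / (y + t)) * ME + (y / (y + t)) * MF with hv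
  have huv : u ≤ v := by
    apply add_le_add
    · exact mul_le_mul_of_nonneg_left hmE (le_of_lt (div_pos ht hyt))
    · exact mul_le_mul_of_nonneg_left hmF (le_of_lt (div_pos hy hyt))
  have hu0 : (u, (0:ℝ)) ∈ S := hcomb mE ⟨le_refl _, hmE⟩ mF ⟨le_refl _, hmF⟩
  have hv0 : (v, (0:ℝ)) ∈ S := hcomb ME ⟨hmE, le_refl _⟩ MF ⟨hmF, le_refl _⟩
  have hsub : Icc u v ⊆ {x : ℝ | (x, (0:ℝ)) ∈ S} :=
    (ntg_slice_convex S hconv 0).ordConnected.out hu0 hv0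
  have hvol : ENNReal.ofReal (v - u) ≤ ENNReal.ofReal ε := by
    calc ENNReal.ofReal (v - u) = volume (Icc u v) := (Real.volume_Icc).symm
    _ ≤ volume {x : ℝ | (x, (0:ℝ)) ∈ S} := measure_mono hsub
    _ ≤ ENNReal.ofReal ε := hlen
  have hreal : v - u ≤ ε := by
    rwa [ENNReal.ofReal_le_ofReal_iff hε.le] at hvol
  have hkey : t * (ME - mE) + y * (MF - mF) ≤ (y + t) * ε := by
    have : t * (ME - mE) + y * (MF - mF) = (y + t) * (v - u) := by
      rw [hv, hu]; field_simp; ring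
    rw [this]
    exact mul_le_mul_of_nonneg_left hreal hyt.le
  rw [hEeq, hFeq, Real.volume_Icc, Real.volume_Icc,
    ← ENNReal.ofReal_mul ht.le, ← ENNReal.ofReal_mul hy.le,
    ← ENNReal.ofReal_add (by nlinarith) (by nlinarith)]
  exact ENNReal.ofReal_le_ofReal hkey

lemma ntg_slice_fun_measurable (S : Set (ℝ × ℝ)) (hS : MeasurableSet S) :
    Measurable (fun c : ℝ => volume {x : ℝ | (x, c) ∈ S}) := by
  have hT : MeasurableSet (Prod.swap ⁻¹' S : Set (ℝ × ℝ)) := hS.preimage measurable_swap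
  exact measurable_measure_prodMk_left (ν := (volume : Measure ℝ)) hT

lemma ntg_upper_half_bound (S : Set (ℝ × ℝ)) (hS : MeasurableSet S) (b : ℝ)
    (hb : ∀ p ∈ S, p.2 ≤ b) :
    volume {p ∈ S | 0 ≤ p.2} ≤ ∫⁻ y in Ioc 0 b, volume {x : ℝ | (x, y) ∈ S} := by
  have hS' : MeasurableSet {p : ℝ × ℝ | p ∈ S ∧ 0 ≤ p.2} :=
    hS.inter (measurableSet_le measurable_const measurable_snd)
  have h1 : volume {p ∈ S | 0 ≤ p.2}
      = ∫⁻ y, volume ((fun x => (x, y)) ⁻¹' {p : ℝ × ℝ | p ∈ S ∧ 0 ≤ p.2}) := by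
    rw [MeasureTheory.Measure.volume_eq_prod]
    exact Measure.prod_apply_symm hS'
  rw [h1, ← lintegral_indicator measurableSet_Ioc]
  apply lintegral_mono_ae
  filter_upwards [ae_iff.2 (show volume {(y:ℝ) | ¬ y ≠ 0} = 0 by simp)] with y hy
  by_cases hmem : y ∈ Ioc 0 b
  · rw [indicator_of_mem hmem]
    apply measure_mono
    intro x hx
    exact hx.1
  · rw [indicator_of_notMem hmem]
    have hempty : ((fun x => (x, y)) ⁻¹' {p : ℝ × ℝ | p ∈ S ∧ 0 ≤ p.2}) = ∅ := by
      ext x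
      simp only [mem_preimage, mem_setOf_eq, mem_empty_iff_false, iff_false]
      rintro ⟨hxS, hy0⟩
      exact hmem ⟨lt_of_le_of_ne hy0 (Ne.symm hy), hb _ hxS⟩
    rw [hempty]
    simp

lemma ntg_lint_lin (a c d : ℝ) (ha : 0 ≤ a) (hc : 0 ≤ c) (hd : 0 ≤ d) :
    ∫⁻ t in Ioc 0 a, ENNReal.ofReal (c * t + d) = ENNReal.ofReal (c * a ^ 2 / 2 + d * a) := by
  rw [← ofReal_integral_eq_lintegral_ofReal]
  · congr 1
    rw [← intervalIntegral.integral_of_le ha,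
      intervalIntegral.integral_add ((continuous_mul_left c).intervalIntegrable 0 a)
        intervalIntegrable_const]
    rw [intervalIntegral.integral_const_mul, integral_id]
    simp only [intervalIntegral.integral_const, smul_eq_mul]
    ring
  · exact ((continuous_const.mul continuous_id).add continuous_const).integrableOn_Ioc
  · filter_upwards [self_mem_ae_restrict measurableSet_Ioc] with t ht
    have : (0:ℝ) < t := ht.1
    positivity

lemma ntg_le (a b ε : ℝ) (ha1 : a ≤ 1) (hb1 : b ≤ 1) (hε : 0 ≤ ε) :
    ε * b * a ^ 2 / 2 + ε * b ^ 2 / 2 * a ≤ ε * ((a ^ 2 + b ^ 2) / 2) := by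
  nlinarith [mul_nonneg (mul_nonneg hε (sq_nonneg a)) (sub_nonneg.2 hb1),
    mul_nonneg (mul_nonneg hε (sq_nonneg b)) (sub_nonneg.2 ha1)]

end NarrowGapAux

/-- If a compact convex set `S` lies in the horizontal strip `-1 ≤ y ≤ 1` and its
intersection with the x-axis has length at most `ε`, then one of the two parts of
`S` above and below the x-axis has area at most `ε`. -/
theorem convex_through_narrow_gap
    (S : Set (ℝ × ℝ)) (hcpt : IsCompact S) (hconv : Convex ℝ S)
    (hstrip : ∀ p ∈ S, -1 ≤ p.2 ∧ p.2 ≤ 1)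
    (ε : ℝ) (hε : 0 < ε)
    (hlen : volume {x : ℝ | (x, (0 : ℝ)) ∈ S} ≤ ENNReal.ofReal ε) :
    min (volume {p ∈ S | 0 ≤ p.2}) (volume {p ∈ S | p.2 ≤ 0}) ≤ ENNReal.ofReal ε := by
  have hSm : MeasurableSet S := hcpt.isClosed.measurableSet
  rcases S.eq_empty_or_nonempty with hSe | hSne
  · simp [hSe]
  obtain ⟨p, hpS, hp⟩ := hcpt.exists_isMaxOn hSne continuous_snd.continuousOn
  obtain ⟨q, hqS, hq⟩ := hcpt.exists_isMinOn hSne continuous_snd.continuousOn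
  have hnull : volume {r : ℝ × ℝ | r.2 = 0} = 0 := by
    have h : {r : ℝ × ℝ | r.2 = 0} = (univ : Set ℝ) ×ˢ ({0} : Set ℝ) := by
      ext r
      simp only [mem_setOf_eq, mem_prod, mem_univ, mem_singleton_iff, true_and]
    rw [h, Measure.volume_eq_prod, Measure.prod_prod]
    simp
  by_cases hb0 : p.2 ≤ 0
  · refine le_trans (min_le_left _ _) ?_
    have hsub : {r ∈ S | 0 ≤ r.2} ⊆ {r : ℝ × ℝ | r.2 = 0} := by
      rintro r ⟨hrS, hr⟩
      exact le_antisymm (le_trans (hp hrS) hb0) hr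
    calc volume {r ∈ S | 0 ≤ r.2} ≤ 0 := hnull ▸ measure_mono hsub
    _ ≤ _ := by simp
  by_cases ha0 : 0 ≤ q.2
  · refine le_trans (min_le_right _ _) ?_
    have hsub : {r ∈ S | r.2 ≤ 0} ⊆ {r : ℝ × ℝ | r.2 = 0} := by
      rintro r ⟨hrS, hr⟩
      exact le_antisymm hr (le_trans ha0 (hq hrS))
    calc volume {r ∈ S | r.2 ≤ 0} ≤ 0 := hnull ▸ measure_mono hsub
    _ ≤ _ := by simp
  push_neg at hb0 ha0
  set b : ℝ := p.2 with hbdef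
  set a : ℝ := -q.2 with hadef
  have hb : 0 < b := hb0
  have ha : 0 < a := by rw [hadef]; linarith
  have hb1 : b ≤ 1 := (hstrip p hpS).2
  have ha1 : a ≤ 1 := by have := (hstrip q hqS).1; rw [hadef]; linarith
  have hqp2 : q.2 < p.2 := by linarith
  set w : ℝ → ℝ≥0∞ := fun c => volume {x : ℝ | (x, c) ∈ S} with hwdef
  have hwm : Measurable w := ntg_slice_fun_measurable S hSm
  set A' : ℝ≥0∞ := ∫⁻ y in Ioc 0 b, w y with hA'def
  set w' : ℝ → ℝ≥0∞ := fun t => w (-t) with hw'def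
  have hw'm : Measurable w' := hwm.comp measurable_neg
  set B' : ℝ≥0∞ := ∫⁻ t in Ioc 0 a, w' t with hB'def
  have hA : volume {r ∈ S | 0 ≤ r.2} ≤ A' :=
    ntg_upper_half_bound S hSm b (fun r hr => hp hr)
  -- lower half via reflection
  set m : ℝ × ℝ → ℝ × ℝ := fun r => (r.1, -r.2) with hmdef
  have hmmeas : Measurable m := measurable_fst.prodMk measurable_snd.neg
  have hmp : MeasurePreserving m volume volume := by
    rw [Measure.volume_eq_prod]
    exact (MeasurePreserving.id volume).prod (Measure.measurePreserving_neg volume)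
  set S' : Set (ℝ × ℝ) := m ⁻¹' S with hS'def
  have hS'm : MeasurableSet S' := hSm.preimage hmmeas
  have hS'top : ∀ r ∈ S', r.2 ≤ a := by
    intro r hr
    have : q.2 ≤ (m r).2 := hq hr
    rw [hadef]
    simp only [hmdef] at this
    linarith
  have hBeq : volume {r ∈ S | r.2 ≤ 0} = volume {r ∈ S' | 0 ≤ r.2} := by
    have hpre : m ⁻¹' {r ∈ S | r.2 ≤ 0} = {r ∈ S' | 0 ≤ r.2} := by
      ext r
      simp only [hS'def, hmdef, mem_preimage, mem_setOf_eq]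
      exact and_congr_right fun _ => neg_nonpos
    have hms : MeasurableSet {r : ℝ × ℝ | r ∈ S ∧ r.2 ≤ 0} :=
      hSm.inter (measurableSet_le measurable_snd measurable_const)
    rw [← hpre]
    exact (hmp.measure_preimage hms.nullMeasurableSet).symm
  have hB : volume {r ∈ S | r.2 ≤ 0} ≤ B' := by
    rw [hBeq]
    exact ntg_upper_half_bound S' hS'm a hS'top
  -- nonemptiness of slices
  have hEne : ∀ y ∈ Ioc (0:ℝ) b, {x : ℝ | (x, y) ∈ S}.Nonempty := by
    intro y hy
    exact ntg_slice_nonempty S hconv p q hpS hqS y (by linarith [hy.1]) hy.2 hqp2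
  have hFne : ∀ t ∈ Ioc (0:ℝ) a, {x : ℝ | (x, -t) ∈ S}.Nonempty := by
    intro t ht
    refine ntg_slice_nonempty S hconv p q hpS hqS (-t) ?_ (by linarith [ht.1]) hqp2
    have : t ≤ a := ht.2
    rw [hadef] at this
    linarith
  -- step 1: integrate the key inequality in y
  have hIid : ∫⁻ y in Ioc 0 b, ENNReal.ofReal y = ENNReal.ofReal (b ^ 2 / 2) := by
    have := ntg_lint_lin b 1 0 hb.le zero_le_one le_rfl
    simpa using this
  have hIa : ∫⁻ t in Ioc 0 a, ENNReal.ofReal t = ENNReal.ofReal (a ^ 2 / 2) := by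
    have := ntg_lint_lin a 1 0 ha.le zero_le_one le_rfl
    simpa using this
  have step1 : ∀ t ∈ Ioc (0:ℝ) a,
      ENNReal.ofReal t * A' + ENNReal.ofReal (b ^ 2 / 2) * w' t
        ≤ ENNReal.ofReal (ε * b * t + ε * b ^ 2 / 2) := by
    intro t ht
    have hmono : ∫⁻ y in Ioc 0 b, (ENNReal.ofReal t * w y + ENNReal.ofReal y * w' t)
        ≤ ∫⁻ y in Ioc 0 b, ENNReal.ofReal ((y + t) * ε) := by
      refine setLIntegral_mono (((measurable_id.add_const t).mul_const ε).ennreal_ofReal) ?_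
      intro y hy
      exact ntg_key_ineq S hcpt hconv ε hε hlen y t hy.1 ht.1 (hEne y hy) (hFne t ht)
    have hsplitI : ∫⁻ y in Ioc 0 b, (ENNReal.ofReal t * w y + ENNReal.ofReal y * w' t)
        = ENNReal.ofReal t * A' + ENNReal.ofReal (b ^ 2 / 2) * w' t := by
      rw [lintegral_add_left (hwm.const_mul _), lintegral_const_mul _ hwm,
        lintegral_mul_const _ ENNReal.measurable_ofReal, hIid]
    have hrhs : ∫⁻ y in Ioc 0 b, ENNReal.ofReal ((y + t) * ε)
        = ENNReal.ofReal (ε * b ^ 2 / 2 + (t * ε) * b) := by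
      have hptw : ∀ y : ℝ, ENNReal.ofReal ((y + t) * ε) = ENNReal.ofReal (ε * y + t * ε) :=
        fun y => by ring_nf
      simp_rw [hptw]
      exact ntg_lint_lin b ε (t * ε) hb.le hε.le (mul_nonneg ht.1.le hε.le)
    calc ENNReal.ofReal t * A' + ENNReal.ofReal (b ^ 2 / 2) * w' t
        = ∫⁻ y in Ioc 0 b, (ENNReal.ofReal t * w y + ENNReal.ofReal y * w' t) := hsplitI.symm
      _ ≤ ∫⁻ y in Ioc 0 b, ENNReal.ofReal ((y + t) * ε) := hmono
      _ = ENNReal.ofReal (ε * b ^ 2 / 2 + (t * ε) * b) := hrhs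
      _ = ENNReal.ofReal (ε * b * t + ε * b ^ 2 / 2) := by congr 1; ring
  have step2 : ENNReal.ofReal (a ^ 2 / 2) * A' + ENNReal.ofReal (b ^ 2 / 2) * B'
      ≤ ENNReal.ofReal (ε * b * a ^ 2 / 2 + ε * b ^ 2 / 2 * a) := by
    have hmono2 : ∫⁻ t in Ioc 0 a, (ENNReal.ofReal t * A' + ENNReal.ofReal (b ^ 2 / 2) * w' t)
        ≤ ∫⁻ t in Ioc 0 a, ENNReal.ofReal (ε * b * t + ε * b ^ 2 / 2) :=
      setLIntegral_mono (((measurable_const.mul measurable_id).add_const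
        (ε * b ^ 2 / 2)).ennreal_ofReal) step1
    have hlhs : ∫⁻ t in Ioc 0 a, (ENNReal.ofReal t * A' + ENNReal.ofReal (b ^ 2 / 2) * w' t)
        = ENNReal.ofReal (a ^ 2 / 2) * A' + ENNReal.ofReal (b ^ 2 / 2) * B' := by
      rw [lintegral_add_left (ENNReal.measurable_ofReal.mul_const A'),
        lintegral_mul_const _ ENNReal.measurable_ofReal,
        lintegral_const_mul _ hw'm, hIa]
    have hrhs2 : ∫⁻ t in Ioc 0 a, ENNReal.ofReal (ε * b * t + ε * b ^ 2 / 2)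
        = ENNReal.ofReal ((ε * b) * a ^ 2 / 2 + (ε * b ^ 2 / 2) * a) :=
      ntg_lint_lin a (ε * b) (ε * b ^ 2 / 2) ha.le (by positivity) (by positivity)
    calc ENNReal.ofReal (a ^ 2 / 2) * A' + ENNReal.ofReal (b ^ 2 / 2) * B'
        = ∫⁻ t in Ioc 0 a, (ENNReal.ofReal t * A' + ENNReal.ofReal (b ^ 2 / 2) * w' t) :=
          hlhs.symm
      _ ≤ ∫⁻ t in Ioc 0 a, ENNReal.ofReal (ε * b * t + ε * b ^ 2 / 2) := hmono2
      _ = ENNReal.ofReal ((ε * b) * a ^ 2 / 2 + (ε * b ^ 2 / 2) * a) := hrhs2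
      _ = ENNReal.ofReal (ε * b * a ^ 2 / 2 + ε * b ^ 2 / 2 * a) := by congr 1
  set M := min (volume {r ∈ S | 0 ≤ r.2}) (volume {r ∈ S | r.2 ≤ 0}) with hMdef
  have hMA : M ≤ A' := le_trans (min_le_left _ _) hA
  have hMB : M ≤ B' := le_trans (min_le_right _ _) hB
  have hsplit : ENNReal.ofReal ((a ^ 2 + b ^ 2) / 2)
      = ENNReal.ofReal (a ^ 2 / 2) + ENNReal.ofReal (b ^ 2 / 2) := by
    rw [← ENNReal.ofReal_add (by positivity) (by positivity)]
    congr 1; ring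
  have hchain : M * ENNReal.ofReal ((a ^ 2 + b ^ 2) / 2)
      ≤ ENNReal.ofReal ε * ENNReal.ofReal ((a ^ 2 + b ^ 2) / 2) := by
    calc M * ENNReal.ofReal ((a ^ 2 + b ^ 2) / 2)
        = ENNReal.ofReal (a ^ 2 / 2) * M + ENNReal.ofReal (b ^ 2 / 2) * M := by
          rw [hsplit]; ring
      _ ≤ ENNReal.ofReal (a ^ 2 / 2) * A' + ENNReal.ofReal (b ^ 2 / 2) * B' :=
          add_le_add (by gcongr) (by gcongr)
      _ ≤ ENNReal.ofReal (ε * b * a ^ 2 / 2 + ε * b ^ 2 / 2 * a) := step2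
      _ ≤ ENNReal.ofReal ε * ENNReal.ofReal ((a ^ 2 + b ^ 2) / 2) := by
          rw [← ENNReal.ofReal_mul hε.le]
          apply ENNReal.ofReal_le_ofReal
          exact ntg_le a b ε ha1 hb1 hε.le
  have hc0 : (ENNReal.ofReal ((a ^ 2 + b ^ 2) / 2)) ≠ 0 := by
    simp only [ne_eq, ENNReal.ofReal_eq_zero, not_le]
    positivity
  exact (ENNReal.mul_le_mul_iff_left hc0 ENNReal.ofReal_ne_top).mp hchain
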